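/- Let X be a finite set of samples, and for a classifier let γ(x) denote the margin of sample x under model W_s and γ'(x) the margin under model W_t, where a sample is misclassified under a model iff its margin is ≤ 0. Assume every sample correctly classified under W_s has margin at least γ_min > 0 under W_s. Then the increase in error rate satisfies E(W_t) − E(W_s) ≤ (1/γ_min) · (1/|X|) ∑_{x∈X} max(0, γ(x) − γ'(x)), where E(W) is the fraction of samples with margin ≤ 0 under W. -/

import Mathlib

open Finset

/-- Margin-based forgetting bound (Lemma 1, empirical form). If every sample
correctly classified under the old model has margin at least γ_min > 0, then the
increase in error rate is bounded by the average positive margin drop divided by γ_min. -/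
theorem error_increase_le_margin_drop {X : Type*} [Fintype X] [Nonempty X]
    (γ γ' : X → ℝ) (γmin : ℝ) (hγmin : 0 < γmin)
    (hcorrect : ∀ x : X, 0 < γ x → γmin ≤ γ x) :
    ((Finset.univ.filter (fun x : X => γ' x ≤ 0)).card : ℝ) / (Fintype.card X : ℝ)
      - ((Finset.univ.filter (fun x : X => γ x ≤ 0)).card : ℝ) / (Fintype.card X : ℝ)
      ≤ (1 / γmin) * ((1 / (Fintype.card X : ℝ)) * ∑ x : X, max 0 (γ x - γ' x)) := by
  classical
  set A := Finset.univ.filter (fun x : X => γ' x ≤ 0) with hA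
  set B := Finset.univ.filter (fun x : X => γ x ≤ 0) with hB
  have hN : (0:ℝ) < (Fintype.card X : ℝ) := by exact_mod_cast Fintype.card_pos
  have hkey : γmin * ((A \ B).card : ℝ) ≤ ∑ x : X, max 0 (γ x - γ' x) := by
    calc γmin * ((A \ B).card : ℝ) = ∑ _x ∈ A \ B, γmin := by
          rw [Finset.sum_const, nsmul_eq_mul, mul_comm]
      _ ≤ ∑ x ∈ A \ B, max 0 (γ x - γ' x) := by
          apply Finset.sum_le_sum
          intro x hx
          simp only [hA, hB, Finset.mem_sdiff, Finset.mem_filter, Finset.mem_univ,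
            true_and] at hx
          obtain ⟨h1, h2⟩ := hx
          have hpos : 0 < γ x := lt_of_not_ge h2
          have := hcorrect x hpos
          have : γmin ≤ γ x - γ' x := by linarith
          exact le_trans this (le_max_right _ _)
      _ ≤ ∑ x : X, max 0 (γ x - γ' x) := by
          apply Finset.sum_le_sum_of_subset_of_nonneg (Finset.subset_univ _)
          intro x _ _; exact le_max_left _ _
  have hcard : (A.card : ℝ) - (B.card : ℝ) ≤ ((A \ B).card : ℝ) := by
    have h := Finset.card_le_card_sdiff_add_card (s := A) (t := B)
    have : (A.card : ℝ) ≤ ((A \ B).card : ℝ) + (B.card : ℝ) := by exact_mod_cast h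
    linarith
  rw [div_sub_div_same, div_le_iff₀ hN]
  have hAB : ((A \ B).card : ℝ) ≤ (1 / γmin) * ∑ x : X, max 0 (γ x - γ' x) := by
    rw [one_div, ← div_eq_inv_mul, le_div_iff₀ hγmin]
    linarith [hkey]
  calc (A.card : ℝ) - (B.card : ℝ) ≤ ((A \ B).card : ℝ) := hcard
    _ ≤ (1 / γmin) * ∑ x : X, max 0 (γ x - γ' x) := hAB
    _ = 1 / γmin * (1 / ↑(Fintype.card X) * ∑ x : X, max 0 (γ x - γ' x)) * ↑(Fintype.card X) := by
        field_simp
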